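/- Fix m ∈ [0,1), c ≠ 0 real, and V real, and define the cnoidal profile p : ℝ → ℝ by p(x) = (c·K(m)²/(3π²))·(V/2 − (m+1)/3 + m·sn((K(m)/π)·x|m)²). Then ∫₀^{2π} p(x) dx = 0 if and only if V = 2·E(m)/K(m) − (4 − 2m)/3. (A cnoidal wave has vanishing average over one wavelength exactly when its rescaled velocity lies on the zero-average curve.) -/

import Mathlib

open Real

/-- Incomplete elliptic integral of the first kind `F(θ|m) = ∫₀^θ ds/√(1 - m sin²s)`. -/
noncomputable def ellF (m θ : ℝ) : ℝ :=
  ∫ s in (0:ℝ)..θ, 1 / Real.sqrt (1 - m * Real.sin s ^ 2)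

/-- Complete elliptic integral of the first kind `K(m) = F(π/2|m)`. -/
noncomputable def ellK (m : ℝ) : ℝ := ellF m (π / 2)

/-- Complete elliptic integral of the second kind `E(m) = ∫₀^{π/2} √(1 - m sin²θ) dθ`. -/
noncomputable def ellE (m : ℝ) : ℝ :=
  ∫ θ in (0:ℝ)..(π / 2), Real.sqrt (1 - m * Real.sin θ ^ 2)

/-- Jacobi amplitude: the inverse function of `θ ↦ F(θ|m)`. -/
noncomputable def am (m u : ℝ) : ℝ := Function.invFun (ellF m) u

/-- Jacobi elliptic sine. -/
noncomputable def sn (m u : ℝ) : ℝ := Real.sin (am m u)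

/-- Jacobi elliptic cosine. -/
noncomputable def cn (m u : ℝ) : ℝ := Real.cos (am m u)

/-- Jacobi delta amplitude. -/
noncomputable def dn (m u : ℝ) : ℝ := Real.sqrt (1 - m * sn m u ^ 2)

section aux
variable {m : ℝ}

lemma hpos (hm0 : 0 ≤ m) (hm1 : m < 1) (s : ℝ) : 0 < 1 - m * Real.sin s ^ 2 := by
  nlinarith [Real.sin_sq_le_one s, sq_nonneg (Real.sin s)]

lemma hfc (hm0 : 0 ≤ m) (hm1 : m < 1) :
    Continuous (fun s => 1 / Real.sqrt (1 - m * Real.sin s ^ 2)) := by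
  apply continuous_const.div
  · exact (continuous_const.sub (continuous_const.mul (Real.continuous_sin.pow 2))).sqrt
  · exact fun s => (Real.sqrt_pos.2 (hpos hm0 hm1 s)).ne'

lemma hgc (hm0 : 0 ≤ m) (hm1 : m < 1) :
    Continuous (fun s => Real.sqrt (1 - m * Real.sin s ^ 2)) :=
  (continuous_const.sub (continuous_const.mul (Real.continuous_sin.pow 2))).sqrt

lemma hderiv (hm0 : 0 ≤ m) (hm1 : m < 1) (x : ℝ) :
    HasDerivAt (ellF m) (1 / Real.sqrt (1 - m * Real.sin x ^ 2)) x :=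
  ((hfc hm0 hm1).integral_hasStrictDerivAt 0 x).hasDerivAt

lemma hmono (hm0 : 0 ≤ m) (hm1 : m < 1) : StrictMono (ellF m) := by
  intro a b hab
  have h1 : ellF m a + (∫ s in a..b, 1 / Real.sqrt (1 - m * Real.sin s ^ 2)) = ellF m b :=
    intervalIntegral.integral_add_adjacent_intervals
      ((hfc hm0 hm1).intervalIntegrable 0 a) ((hfc hm0 hm1).intervalIntegrable a b)
  have h2 : 0 < ∫ s in a..b, 1 / Real.sqrt (1 - m * Real.sin s ^ 2) :=
    intervalIntegral.intervalIntegral_pos_of_pos ((hfc hm0 hm1).intervalIntegrable a b)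
      (fun x => div_pos one_pos (Real.sqrt_pos.2 (hpos hm0 hm1 x))) hab
  linarith

lemma hge (hm0 : 0 ≤ m) (hm1 : m < 1) {θ : ℝ} (hθ : 0 ≤ θ) : θ ≤ ellF m θ := by
  have h0 : (θ : ℝ) = ∫ s in (0:ℝ)..θ, (1:ℝ) := by simp
  have hle : (∫ s in (0:ℝ)..θ, (1:ℝ)) ≤ ∫ s in (0:ℝ)..θ, 1 / Real.sqrt (1 - m * Real.sin s ^ 2) := by
    apply intervalIntegral.integral_mono_on hθ intervalIntegrable_const
      ((hfc hm0 hm1).intervalIntegrable 0 θ)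
    intro x _
    rw [le_div_iff₀ (Real.sqrt_pos.2 (hpos hm0 hm1 x)), one_mul]
    apply Real.sqrt_le_one.2
    nlinarith [sq_nonneg (Real.sin x)]
  calc θ = ∫ s in (0:ℝ)..θ, (1:ℝ) := h0
  _ ≤ _ := hle

lemma hodd (hm0 : 0 ≤ m) (hm1 : m < 1) (θ : ℝ) : ellF m (-θ) = - ellF m θ := by
  have h : ∀ x : ℝ, 1 / Real.sqrt (1 - m * Real.sin (-x) ^ 2)
      = 1 / Real.sqrt (1 - m * Real.sin x ^ 2) := by
    intro x; rw [Real.sin_neg]; ring_nf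
  have := intervalIntegral.integral_comp_neg (a := (0:ℝ)) (b := θ)
    (fun s => 1 / Real.sqrt (1 - m * Real.sin s ^ 2))
  simp only [h, neg_zero] at this
  have h2 : (∫ s in (0:ℝ)..(-θ), 1 / Real.sqrt (1 - m * Real.sin s ^ 2))
      = -∫ s in (-θ:ℝ)..0, 1 / Real.sqrt (1 - m * Real.sin s ^ 2) :=
    intervalIntegral.integral_symm _ _
  unfold ellF
  rw [h2, ← this]

lemma hcont (hm0 : 0 ≤ m) (hm1 : m < 1) : Continuous (ellF m) := by
  rw [continuous_iff_continuousAt]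
  exact fun x => (hderiv hm0 hm1 x).continuousAt

lemma hsurj (hm0 : 0 ≤ m) (hm1 : m < 1) : Function.Surjective (ellF m) := by
  intro y
  have h1 : ellF m (-|y|) ≤ y := by
    rw [hodd hm0 hm1]
    have := hge hm0 hm1 (abs_nonneg y)
    have := neg_abs_le y
    linarith
  have h2 : y ≤ ellF m |y| := le_trans (le_abs_self y) (hge hm0 hm1 (abs_nonneg y))
  have hab : (-|y|) ≤ |y| := by linarith [abs_nonneg y]
  have hy : y ∈ Set.Icc (ellF m (-|y|)) (ellF m |y|) := ⟨h1, h2⟩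
  obtain ⟨x, _, hx⟩ := intermediate_value_Icc hab ((hcont hm0 hm1).continuousOn) hy
  exact ⟨x, hx⟩

end aux


/-- **Zero-average criterion for cnoidal waves.**  For `m ∈ [0,1)` and `c ≠ 0`, the
cnoidal profile `p(x) = (cK(m)²/(3π²))(V/2 - (m+1)/3 + m sn((K(m)/π)x|m)²)` has
vanishing integral over one wavelength `2π` if and only if
`V = 2E(m)/K(m) - (4-2m)/3`. -/
theorem cnoidal_zero_average_iff
    (m c V : ℝ) (hm : m ∈ Set.Ico (0:ℝ) 1) (hc : c ≠ 0) :
    let p : ℝ → ℝ := fun x =>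
      c * ellK m ^ 2 / (3 * π ^ 2) *
        (V / 2 - (m + 1) / 3 + m * sn m (ellK m / π * x) ^ 2)
    (∫ x in (0:ℝ)..(2 * π), p x) = 0 ↔
      V = 2 * ellE m / ellK m - (4 - 2 * m) / 3 := by
  obtain ⟨hm0, hm1⟩ := hm
  intro p
  have hinj := (hmono hm0 hm1).injective
  have h_right : ∀ u, ellF m (am m u) = u := fun u => Function.invFun_eq (hsurj hm0 hm1 u)
  have h_left : ∀ θ, am m (ellF m θ) = θ := fun θ => Function.leftInverse_invFun hinj θ
  set e := StrictMono.orderIsoOfSurjective (ellF m) (hmono hm0 hm1) (hsurj hm0 hm1) with he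
  have hce : ⇑e = ellF m := StrictMono.coe_orderIsoOfSurjective _ _ _
  have h_am_eq : am m = ⇑e.symm := by
    funext u
    apply hinj
    rw [h_right u]
    conv_rhs => rw [show ellF m = ⇑e from hce.symm]
    exact (e.apply_symm_apply u).symm
  have h_am_cont : Continuous (am m) := by rw [h_am_eq]; exact (e.symm : ℝ ≃o ℝ).continuous
  have hsncont : Continuous (fun u => sn m u ^ 2) := by
    unfold sn
    exact (Real.continuous_sin.comp h_am_cont).pow 2
  set f : ℝ → ℝ := fun s => 1 / Real.sqrt (1 - m * Real.sin s ^ 2) with hfdef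
  set g : ℝ → ℝ := fun s => Real.sqrt (1 - m * Real.sin s ^ 2) with hgdef
  have hfc' : Continuous f := hfc hm0 hm1
  have hgc' : Continuous g := hgc hm0 hm1
  have hKpos : 0 < ellK m := lt_of_lt_of_le (by positivity) (hge hm0 hm1 (by positivity))
  -- symmetry of integrals over [0,π]
  have hsym : ∀ h : ℝ → ℝ, (∀ x, h (π - x) = h x) → Continuous h →
      (∫ s in (0:ℝ)..π, h s) = 2 * ∫ s in (0:ℝ)..(π/2), h s := by
    intro h hh hhc
    have hadd : (∫ s in (0:ℝ)..(π/2), h s) + (∫ s in (π/2:ℝ)..π, h s) = ∫ s in (0:ℝ)..π, h s :=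
      intervalIntegral.integral_add_adjacent_intervals (hhc.intervalIntegrable _ _)
        (hhc.intervalIntegrable _ _)
    have hcs := intervalIntegral.integral_comp_sub_left (a := (0:ℝ)) (b := π/2) h π
    simp only [hh, sub_zero] at hcs
    have : π - π/2 = π/2 := by ring
    rw [this] at hcs
    linarith [hcs, hadd]
  have hFpi : ellF m π = 2 * ellK m := hsym f (fun x => by simp [hfdef, Real.sin_pi_sub]) hfc'
  have hGpi : (∫ s in (0:ℝ)..π, g s) = 2 * ellE m := hsym g (fun x => by simp [hgdef, Real.sin_pi_sub]) hgc'
  have hF0 : ellF m 0 = 0 := by unfold ellF; simp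
  -- change of variables u = ellF m θ
  have hsub : (∫ u in (0:ℝ)..(2 * ellK m), sn m u ^ 2) = ∫ θ in (0:ℝ)..π, f θ * Real.sin θ ^ 2 := by
    have h := intervalIntegral.integral_comp_smul_deriv (a := (0:ℝ)) (b := π)
      (fun x _ => hderiv hm0 hm1 x) (hfc').continuousOn hsncont
    rw [hF0, hFpi] at h
    rw [← h]
    apply intervalIntegral.integral_congr
    intro x _
    simp only [Function.comp, smul_eq_mul, sn, h_left]
    rfl
  -- pointwise identity
  have hptwise : ∀ θ : ℝ, m * (f θ * Real.sin θ ^ 2) = f θ - g θ := by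
    intro θ
    have h1 := hpos hm0 hm1 θ
    have hgne : g θ ≠ 0 := (Real.sqrt_pos.2 h1).ne'
    have hs : g θ * g θ = 1 - m * Real.sin θ ^ 2 := Real.mul_self_sqrt h1.le
    simp only [hfdef, hgdef] at *
    field_simp
    rw [Real.sq_sqrt h1.le]; ring
  have hval : m * (∫ θ in (0:ℝ)..π, f θ * Real.sin θ ^ 2) = 2 * ellK m - 2 * ellE m := by
    rw [← intervalIntegral.integral_const_mul]
    have : (∫ θ in (0:ℝ)..π, m * (f θ * Real.sin θ ^ 2)) = ∫ θ in (0:ℝ)..π, (f θ - g θ) :=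
      intervalIntegral.integral_congr (fun x _ => hptwise x)
    rw [this, intervalIntegral.integral_sub (hfc'.intervalIntegrable _ _)
      (hgc'.intervalIntegrable _ _)]
    have : (∫ θ in (0:ℝ)..π, f θ) = ellF m π := rfl
    rw [this, hFpi, hGpi]
  set S := ∫ u in (0:ℝ)..(2 * ellK m), sn m u ^ 2 with hS
  have hmS : m * S = 2 * ellK m - 2 * ellE m := by rw [hsub]; exact hval
  -- substitution x ↦ (K/π) x
  have hc0 : ellK m / π ≠ 0 := (div_pos hKpos pi_pos).ne'
  have hxsub : (∫ x in (0:ℝ)..(2*π), sn m (ellK m / π * x) ^ 2) = (π / ellK m) * S := by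
    have h := intervalIntegral.integral_comp_mul_left (a := (0:ℝ)) (b := 2*π)
      (fun u => sn m u ^ 2) hc0
    have h2 : ellK m / π * (2 * π) = 2 * ellK m := by field_simp
    rw [mul_zero, h2] at h
    rw [h, smul_eq_mul, hS]
    congr 1
    field_simp
  -- compute the integral of p
  have hint : (∫ x in (0:ℝ)..(2*π), p x) =
      c * ellK m ^ 2 / (3 * π ^ 2) *
        ((V / 2 - (m + 1) / 3) * (2*π) + m * ((π / ellK m) * S)) := by
    simp only [p]
    rw [intervalIntegral.integral_const_mul]
    congr 1
    have hqc : Continuous (fun x : ℝ => sn m (ellK m / π * x) ^ 2) :=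
      hsncont.comp (continuous_const.mul continuous_id)
    rw [show (fun x : ℝ => V / 2 - (m + 1) / 3 + m * sn m (ellK m / π * x) ^ 2) =
      (fun x : ℝ => (V / 2 - (m + 1) / 3) + m * sn m (ellK m / π * x) ^ 2) from rfl]
    rw [intervalIntegral.integral_add intervalIntegrable_const
      ((hqc.intervalIntegrable _ _).const_mul m),
      intervalIntegral.integral_const_mul, hxsub, intervalIntegral.integral_const]
    simp only [smul_eq_mul, sub_zero]
    ring
  rw [hint]
  have hCne : c * ellK m ^ 2 / (3 * π ^ 2) ≠ 0 := by
    apply div_ne_zero (mul_ne_zero hc (pow_ne_zero 2 hKpos.ne'))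
    positivity
  rw [mul_eq_zero, or_iff_right hCne]
  have hkey : (V / 2 - (m + 1) / 3) * (2*π) + m * ((π / ellK m) * S)
      = π * (V - (2 * ellE m / ellK m - (4 - 2 * m) / 3)) := by
    have hKne : ellK m ≠ 0 := hKpos.ne'
    have : m * ((π / ellK m) * S) = (π / ellK m) * (m * S) := by ring
    rw [this, hmS]
    field_simp
    ring
  rw [hkey, mul_eq_zero, or_iff_right Real.pi_ne_zero, sub_eq_zero]
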